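/- Let N_{l-1} be the array such that N_{l-1}[i] = q iff the (l-1)-suffix of string s_q is the i-th smallest (l-1)-suffix of the collection S, and let B_{l-1}[i] be the symbol preceding that suffix. For a symbol c, let Π_c(N_{l-1}) be the subsequence of N_{l-1} consisting of entries i with B_{l-1}[i] = c. Then Π_c(N_{l-1}) lists, in sorted order of their l-suffixes, exactly the indices of strings whose l-suffix begins with c. -/

import Mathlib

lemma drop_ofFn_cons {A : Type*} {k : ℕ} (f : Fin k → A) (l : ℕ) (h1 : 1 ≤ l) (h2 : l ≤ k) :
    (List.ofFn f).drop (k - l) = f ⟨k - l, Nat.sub_lt_of_pos_le h1 h2⟩ :: (List.ofFn f).drop (k - (l - 1)) := by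
  have hlt : k - l < (List.ofFn f).length := by simp; omega
  rw [List.drop_eq_getElem_cons hlt]
  congr 1
  · simp
  · congr 1; omega

/-- Strict order on string indices given by comparing the `l`-suffixes of the
corresponding strings lexicographically, with ties broken by string index. -/
def suffOrd {A : Type*} [LinearOrder A] {m k : ℕ} (s : Fin m → Fin k → A)
    (l : ℕ) (q q' : Fin m) : Prop :=
  List.Lex (· < ·) ((List.ofFn (s q)).drop (k - l)) ((List.ofFn (s q')).drop (k - l)) ∨
    ((List.ofFn (s q)).drop (k - l) = (List.ofFn (s q')).drop (k - l) ∧ (q : ℕ) < (q' : ℕ))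

/-- Let `N` be the array with `N[i] = q` iff the `(l-1)`-suffix of `s q`
is the `i`-th smallest `(l-1)`-suffix (i.e. `N` is a permutation of all string indices
sorted by `(l-1)`-suffix), and recall that the symbol preceding the `(l-1)`-suffix of
`s q` — the first symbol of its `l`-suffix — is `s q (k - l)`.  For a symbol `c`, the
projection `Π_c(N)` (the subsequence of `N` at positions whose preceding symbol is `c`)
lists, in sorted order of their `l`-suffixes, exactly the indices of strings whose
`l`-suffix begins with `c`. -/
theorem projection_sorted_by_l_suffix {A : Type*} [LinearOrder A] {m k : ℕ}
    (s : Fin m → Fin k → A) (l : ℕ) (hl1 : 1 ≤ l) (hlk : l ≤ k) (c : A)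
    (N : List (Fin m)) (hperm : N.Perm (Finset.univ : Finset (Fin m)).toList)
    (hsort : N.Pairwise (suffOrd s (l - 1))) :
    (N.filter (fun q => s q ⟨k - l, by omega⟩ == c)).Pairwise (suffOrd s l) ∧
      ∀ q : Fin m,
        (q ∈ N.filter (fun q => s q ⟨k - l, by omega⟩ == c) ↔ s q ⟨k - l, by omega⟩ = c) := by
  constructor
  · have hpf : (N.filter (fun q => s q ⟨k - l, by omega⟩ == c)).Pairwise (suffOrd s (l - 1)) :=
      hsort.filter _
    refine hpf.imp_of_mem ?_
    intro a b ha hb hab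
    have hca : s a ⟨k - l, by omega⟩ = c := by
      have := List.of_mem_filter ha; simpa using this
    have hcb : s b ⟨k - l, by omega⟩ = c := by
      have := List.of_mem_filter hb; simpa using this
    have hda := drop_ofFn_cons (s a) l hl1 hlk
    have hdb := drop_ofFn_cons (s b) l hl1 hlk
    rcases hab with h | ⟨heq, hlt⟩
    · left
      rw [hda, hdb, hca, hcb]
      exact List.Lex.cons h
    · right
      refine ⟨?_, hlt⟩
      rw [hda, hdb, hca, hcb, heq]
  · intro q
    rw [List.mem_filter]
    have hq : q ∈ N := by
      rw [hperm.mem_iff, Finset.mem_toList]; exact Finset.mem_univ q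
    simp [hq]
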